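/- Let L, L₀, M be n×n matrices with L and L₀ symmetric positive definite and M symmetric positive semidefinite satisfying M L₀ M ≤ M. Then for every λ ∈ [0,1] the matrix L_λ = L₀ + λ [I + (1−λ)(L − L₀)M]^{-1} (L − L₀) is well defined (the inverse exists) and L_λ is positive definite. -/

import Mathlib

open Matrix

private lemma dot_symm_aux {n : ℕ} {A : Matrix (Fin n) (Fin n) ℝ} (hA : Aᵀ = A)
    (v w : Fin n → ℝ) : v ⬝ᵥ (A *ᵥ w) = (A *ᵥ v) ⬝ᵥ w := by
  rw [dotProduct_mulVec, ← vecMul_transpose, hA]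

theorem lamination_family_posdef
    {n : ℕ} (L L₀ M : Matrix (Fin n) (Fin n) ℝ)
    (hL : L.PosDef) (hLsym : Lᵀ = L)
    (hL₀ : L₀.PosDef) (hL₀sym : L₀ᵀ = L₀)
    (hM : M.PosSemidef)
    (hMLM : (M - M * L₀ * M).PosSemidef)     -- M L₀ M ≤ M in the Loewner order
    (lam : ℝ) (hlam0 : 0 ≤ lam) (hlam1 : lam ≤ 1) :
    IsUnit (1 + (1 - lam) • ((L - L₀) * M)) ∧
    (L₀ + lam • ((1 + (1 - lam) • ((L - L₀) * M))⁻¹ * (L - L₀))).PosDef := by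
  have hMsym : Mᵀ = M := by
    have h2 : Mᴴ = M := hM.1
    rwa [conjTranspose_eq_transpose_of_trivial] at h2
  set t : ℝ := 1 - lam with ht
  have ht0 : 0 ≤ t := by rw [ht]; linarith
  have ht1 : t ≤ 1 := by rw [ht]; linarith
  set D : Matrix (Fin n) (Fin n) ℝ := L - L₀ with hD
  have hDsym : Dᵀ = D := by rw [hD, transpose_sub, hLsym, hL₀sym]
  set B : Matrix (Fin n) (Fin n) ℝ := 1 + t • (D * M) with hB
  have hDmv : ∀ v : Fin n → ℝ, D *ᵥ v = L *ᵥ v - L₀ *ᵥ v := by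
    intro v; rw [hD, sub_mulVec]
  -- kernel of B is trivial
  have hker : ∀ x : Fin n → ℝ, B *ᵥ x = 0 → x = 0 := by
    intro x hx
    have hxy : x + t • (D *ᵥ (M *ᵥ x)) = 0 := by
      have h := hx
      rwa [hB, add_mulVec, one_mulVec, smul_mulVec, ← mulVec_mulVec] at h
    set y : Fin n → ℝ := M *ᵥ x with hy
    have hxval : x = -(t • (D *ᵥ y)) := eq_neg_of_add_eq_zero_left hxy
    by_cases hy0 : y = 0
    · rw [hxval, hy0, mulVec_zero, smul_zero, neg_zero]
    · exfalso
      set p : ℝ := y ⬝ᵥ (L₀ *ᵥ y) with hp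
      set q : ℝ := y ⬝ᵥ (L *ᵥ y) with hq
      have hppos : 0 < p := by simpa using hL₀.dotProduct_mulVec_pos hy0
      have hqpos : 0 < q := by simpa using hL.dotProduct_mulVec_pos hy0
      -- r = y ⬝ᵥ x
      have hr1 : y ⬝ᵥ x = -(t * (q - p)) := by
        rw [hxval, dotProduct_neg, dotProduct_smul, hDmv, dotProduct_sub]
        push_cast [smul_eq_mul]
        ring
      -- p ≤ y ⬝ᵥ x  from  M L₀ M ≤ M
      have hple : p ≤ y ⬝ᵥ x := by
        have h0 := hMLM.dotProduct_mulVec_nonneg x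
        have hyx : y ⬝ᵥ x = x ⬝ᵥ y := dotProduct_comm _ _
        have hMLMx : x ⬝ᵥ ((M * L₀ * M) *ᵥ x) = p := by
          rw [← mulVec_mulVec, ← mulVec_mulVec, dot_symm_aux hMsym, hp]
        simp only [star_trivial] at h0
        rw [sub_mulVec, dotProduct_sub, hMLMx] at h0
        rw [hyx]
        linarith
      nlinarith [mul_nonneg ht0 hqpos.le, mul_nonneg (sub_nonneg.mpr ht1) hppos.le]
  have hdet : B.det ≠ 0 := by
    intro h
    obtain ⟨v, hv, hv0⟩ := Matrix.exists_mulVec_eq_zero_iff.mpr h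
    exact hv (hker v hv0)
  have hBdet : IsUnit B.det := isUnit_iff_ne_zero.mpr hdet
  have hUnit : IsUnit B := (Matrix.isUnit_iff_isUnit_det B).mpr hBdet
  have hBT : Bᵀ = 1 + t • (M * D) := by
    rw [hB, transpose_add, transpose_one, transpose_smul, transpose_mul, hMsym, hDsym]
  have hBTdet : IsUnit Bᵀ.det := by rwa [Matrix.det_transpose]
  -- commutation identity and symmetry of B⁻¹ * D
  have hcomm : B * D = D * Bᵀ := by
    rw [hB, hBT]
    simp only [add_mul, mul_add, one_mul, mul_one, Matrix.smul_mul, Matrix.mul_smul,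
      Matrix.mul_assoc]
  have hinv : B⁻¹ * D = D * Bᵀ⁻¹ := by
    have h1 : B⁻¹ * (B * D) * Bᵀ⁻¹ = B⁻¹ * (D * Bᵀ) * Bᵀ⁻¹ := by rw [hcomm]
    rw [← Matrix.mul_assoc B⁻¹ B D, Matrix.nonsing_inv_mul B hBdet, Matrix.one_mul,
      ← Matrix.mul_assoc B⁻¹ D Bᵀ, Matrix.mul_assoc (B⁻¹ * D) Bᵀ Bᵀ⁻¹,
      Matrix.mul_nonsing_inv Bᵀ hBTdet, Matrix.mul_one] at h1
    exact h1.symm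
  set C : Matrix (Fin n) (Fin n) ℝ := B⁻¹ * D with hC
  have hCsym : Cᵀ = C := by
    rw [hC, transpose_mul, transpose_nonsing_inv, hDsym, ← hinv]
  refine ⟨hUnit, Matrix.PosDef.of_dotProduct_mulVec_pos ?_ ?_⟩
  · -- Hermitian
    rw [IsHermitian, conjTranspose_eq_transpose_of_trivial, transpose_add, transpose_smul,
      hCsym, hL₀sym]
  · intro x hx
    set u : Fin n → ℝ := Bᵀ⁻¹ *ᵥ x with hu
    have hxu : x = Bᵀ *ᵥ u := by
      rw [hu, mulVec_mulVec, Matrix.mul_nonsing_inv Bᵀ hBTdet, one_mulVec]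
    have hu0 : u ≠ 0 := by
      intro h
      apply hx
      rw [hxu, h, mulVec_zero]
    set w : Fin n → ℝ := D *ᵥ u with hw
    have hxuw : x = u + t • (M *ᵥ w) := by
      rw [hxu, hBT, add_mulVec, one_mulVec, smul_mulVec, ← mulVec_mulVec, ← hw]
    -- scalar quantities
    set a : ℝ := u ⬝ᵥ (L *ᵥ u) with ha
    set a₀ : ℝ := u ⬝ᵥ (L₀ *ᵥ u) with ha₀
    set c : ℝ := w ⬝ᵥ (M *ᵥ w) with hc
    set d : ℝ := (M *ᵥ w) ⬝ᵥ (L₀ *ᵥ (M *ᵥ w)) with hd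
    set s : ℝ := u ⬝ᵥ (L₀ *ᵥ (M *ᵥ w)) with hs
    have hapos : 0 < a := by simpa using hL.dotProduct_mulVec_pos hu0
    have hs' : (M *ᵥ w) ⬝ᵥ (L₀ *ᵥ u) = s := by
      rw [hs, dot_symm_aux hL₀sym u (M *ᵥ w), dotProduct_comm]
    have hdc : d ≤ c := by
      have h0 := hMLM.dotProduct_mulVec_nonneg w
      have h1 : w ⬝ᵥ ((M * L₀ * M) *ᵥ w) = d := by
        rw [← mulVec_mulVec, ← mulVec_mulVec, dot_symm_aux hMsym, hd]
      simp only [star_trivial] at h0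
      rw [sub_mulVec, dotProduct_sub, h1] at h0
      linarith
    -- expand the quadratic form
    have hCx : C *ᵥ x = D *ᵥ u := by
      rw [hinv, ← mulVec_mulVec, ← hu]
    have hQ : x ⬝ᵥ ((L₀ + lam • C) *ᵥ x)
        = a₀ + 2 * t * s + t ^ 2 * d + lam * ((a - a₀) + t * c) := by
      rw [add_mulVec, dotProduct_add, smul_mulVec, dotProduct_smul, hCx, ← hw]
      have hL₀x : x ⬝ᵥ (L₀ *ᵥ x) = a₀ + 2 * t * s + t ^ 2 * d := by
        rw [hxuw, mulVec_add, mulVec_smul, dotProduct_add, add_dotProduct,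
          add_dotProduct, dotProduct_smul, smul_dotProduct, smul_dotProduct,
          dotProduct_smul, hs', ← ha₀, ← hs, ← hd]
        push_cast [smul_eq_mul]
        ring
      have hxw : x ⬝ᵥ w = (a - a₀) + t * c := by
        rw [hxuw, add_dotProduct, smul_dotProduct]
        have h1 : u ⬝ᵥ w = a - a₀ := by
          rw [hw, hDmv, dotProduct_sub, ← ha, ← ha₀]
        have h2 : (M *ᵥ w) ⬝ᵥ w = c := by rw [dotProduct_comm, hc]
        rw [h1, h2, smul_eq_mul]
      rw [hL₀x, hxw, smul_eq_mul]
    rw [star_trivial, hQ]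
    -- Q = lam * a + t * b + lam * t * (c - d)  where b = a₀ + 2s + d ≥ 0
    have hbexp : (u + M *ᵥ w) ⬝ᵥ (L₀ *ᵥ (u + M *ᵥ w)) = a₀ + 2 * s + d := by
      rw [mulVec_add, dotProduct_add, add_dotProduct, add_dotProduct, hs', ← ha₀, ← hs, ← hd]
      ring
    rcases eq_or_lt_of_le hlam0 with hlam' | hlam'
    · -- lam = 0, t = 1, x = u + M *ᵥ w
      have htt : t = 1 := by rw [ht, ← hlam']; ring
      have hxe : x = u + M *ᵥ w := by rw [hxuw, htt, one_smul]
      have hbpos : 0 < (u + M *ᵥ w) ⬝ᵥ (L₀ *ᵥ (u + M *ᵥ w)) := by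
        rw [← hxe]; simpa using hL₀.dotProduct_mulVec_pos hx
      rw [hbexp] at hbpos
      rw [← hlam', htt]
      linarith
    · -- lam > 0
      have hb0 : 0 ≤ (u + M *ᵥ w) ⬝ᵥ (L₀ *ᵥ (u + M *ᵥ w)) := by
        simpa using hL₀.posSemidef.dotProduct_mulVec_nonneg (u + M *ᵥ w)
      rw [hbexp] at hb0
      have hlamt : lam = 1 - t := by rw [ht]; ring
      have hQid : a₀ + 2 * t * s + t ^ 2 * d + lam * ((a - a₀) + t * c)
          = lam * a + t * (a₀ + 2 * s + d) + lam * t * (c - d) := by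
        rw [hlamt]; ring
      nlinarith [mul_pos hlam' hapos, mul_nonneg ht0 hb0,
        mul_nonneg (mul_nonneg hlam0 ht0) (sub_nonneg.mpr hdc)]
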